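/- arXiv:0811.2627 — 3 statements merged into one kernel-verified Lean document; each statement's English description precedes it below -/
import Mathlib

section
/- For every 1-cell f: A→B in S, the following are equivalent: (1) f is an equivalence; (2) f is cofaithful and fully faithful; (3) f is faithful and fully cofaithful. -/
/-!
Common framework: relatively exact 2-categories (after Nakaoka,
"Cohomology theory in 2-categories").
-/

open CategoryTheory Bicategory

universe w v u

/-- The tensor unit of a monoidal structure, given explicitly. -/
abbrev munit {H : Type v} [Category.{w} H] (m : MonoidalCategory H) : H :=
  @MonoidalCategoryStruct.tensorUnit H _ m.toMonoidalCategoryStruct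

/-- The tensor product of two objects, for an explicitly given monoidal structure. -/
abbrev mtens {H : Type v} [Category.{w} H] (m : MonoidalCategory H) (x y : H) : H :=
  @MonoidalCategoryStruct.tensorObj H _ m.toMonoidalCategoryStruct x y

section Defs

variable {B : Type u} [Bicategory.{w, v} B]

/-- A 1-cell `f` is faithful if postwhiskering `− ▷ f` is injective on 2-cells. -/
def CFaithful {A C : B} (f : A ⟶ C) : Prop :=
  ∀ ⦃X : B⦄ ⦃g h : X ⟶ A⦄ (η θ : g ⟶ h), η ▷ f = θ ▷ f → η = θ

/-- A 1-cell `f` is fully faithful if `− ∘ f` is a fully faithful functor on hom-categories. -/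
def CFullyFaithful {A C : B} (f : A ⟶ C) : Prop :=
  CFaithful f ∧ ∀ ⦃X : B⦄ (g h : X ⟶ A) (μ : g ≫ f ⟶ h ≫ f), ∃ η : g ⟶ h, η ▷ f = μ

/-- A 1-cell `f` is cofaithful if prewhiskering `f ◁ −` is injective on 2-cells. -/
def CCofaithful {A C : B} (f : A ⟶ C) : Prop :=
  ∀ ⦃X : B⦄ ⦃g h : C ⟶ X⦄ (η θ : g ⟶ h), f ◁ η = f ◁ θ → η = θ

/-- A 1-cell `f` is fully cofaithful if `f ∘ −` is a fully faithful functor on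
hom-categories. -/
def CFullyCofaithful {A C : B} (f : A ⟶ C) : Prop :=
  CCofaithful f ∧ ∀ ⦃X : B⦄ (g h : C ⟶ X) (μ : f ≫ g ⟶ f ≫ h), ∃ η : g ⟶ h, f ◁ η = μ

/-- A 1-cell is an equivalence if it has a quasi-inverse up to invertible 2-cells. -/
def Is2Equiv {A C : B} (f : A ⟶ C) : Prop :=
  ∃ g : C ⟶ A, Nonempty (f ≫ g ≅ 𝟙 A) ∧ Nonempty (g ≫ f ≅ 𝟙 C)

/-- 2-universal product of two 0-cells. -/
def IsProduct2 (A₁ A₂ P : B) (p₁ : P ⟶ A₁) (p₂ : P ⟶ A₂) : Prop :=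
  (∀ (X : B) (q₁ : X ⟶ A₁) (q₂ : X ⟶ A₂),
    ∃ (q : X ⟶ P) (_ : q ≫ p₁ ⟶ q₁) (_ : q ≫ p₂ ⟶ q₂), True)
  ∧ (∀ (X : B) (q₁ : X ⟶ A₁) (q₂ : X ⟶ A₂) (r r' : X ⟶ P)
      (ξ₁ : r ≫ p₁ ⟶ q₁) (ξ₂ : r ≫ p₂ ⟶ q₂) (ξ₁' : r' ≫ p₁ ⟶ q₁) (ξ₂' : r' ≫ p₂ ⟶ q₂),
      ∃! η : r ⟶ r', ((η ▷ p₁) ≫ ξ₁' = ξ₁) ∧ ((η ▷ p₂) ≫ ξ₂' = ξ₂))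

/-- 2-universal coproduct of two 0-cells. -/
def IsCoproduct2 (A₁ A₂ P : B) (i₁ : A₁ ⟶ P) (i₂ : A₂ ⟶ P) : Prop :=
  (∀ (X : B) (q₁ : A₁ ⟶ X) (q₂ : A₂ ⟶ X),
    ∃ (q : P ⟶ X) (_ : i₁ ≫ q ⟶ q₁) (_ : i₂ ≫ q ⟶ q₂), True)
  ∧ (∀ (X : B) (q₁ : A₁ ⟶ X) (q₂ : A₂ ⟶ X) (r r' : P ⟶ X)
      (ξ₁ : i₁ ≫ r ⟶ q₁) (ξ₂ : i₂ ≫ r ⟶ q₂) (ξ₁' : i₁ ≫ r' ⟶ q₁) (ξ₂' : i₂ ≫ r' ⟶ q₂),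
      ∃! η : r ⟶ r', ((i₁ ◁ η) ≫ ξ₁' = ξ₁) ∧ ((i₂ ◁ η) ≫ ξ₂' = ξ₂))

/-- 2-universal difference kernel of a parallel pair of 1-cells. -/
def IsDiffKernel {A C : B} (g h : A ⟶ C) (D : B) (d : D ⟶ A) (φ : d ≫ g ⟶ d ≫ h) : Prop :=
  (∀ (X : B) (e : X ⟶ A) (ψ : e ≫ g ⟶ e ≫ h),
    ∃ (e' : X ⟶ D) (ε' : e' ≫ d ⟶ e),
      (α_ e' d g).hom ≫ (e' ◁ φ) ≫ (α_ e' d h).inv ≫ (ε' ▷ h) = (ε' ▷ g) ≫ ψ)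
  ∧ (∀ (X : B) (e : X ⟶ A) (ψ : e ≫ g ⟶ e ≫ h)
      (e₁ e₂ : X ⟶ D) (ε₁ : e₁ ≫ d ⟶ e) (ε₂ : e₂ ≫ d ⟶ e),
      ((α_ e₁ d g).hom ≫ (e₁ ◁ φ) ≫ (α_ e₁ d h).inv ≫ (ε₁ ▷ h) = (ε₁ ▷ g) ≫ ψ) →
      ((α_ e₂ d g).hom ≫ (e₂ ◁ φ) ≫ (α_ e₂ d h).inv ≫ (ε₂ ▷ h) = (ε₂ ▷ g) ≫ ψ) →
      ∃! η : e₁ ⟶ e₂, (η ▷ d) ≫ ε₂ = ε₁)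

/-- 2-universal pullback of a cospan of 1-cells. -/
def IsPullback2 {A₁ A₂ C : B} (f₁ : A₁ ⟶ C) (f₂ : A₂ ⟶ C) (P : B)
    (p₁ : P ⟶ A₂) (p₂ : P ⟶ A₁) (ξ : p₁ ≫ f₂ ⟶ p₂ ≫ f₁) : Prop :=
  (∀ (X : B) (g₁ : X ⟶ A₂) (g₂ : X ⟶ A₁) (η : g₁ ≫ f₂ ⟶ g₂ ≫ f₁),
    ∃ (g : X ⟶ P) (ξ₁ : g ≫ p₁ ⟶ g₁) (ξ₂ : g ≫ p₂ ⟶ g₂),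
      (ξ₁ ▷ f₂) ≫ η = (α_ g p₁ f₂).hom ≫ (g ◁ ξ) ≫ (α_ g p₂ f₁).inv ≫ (ξ₂ ▷ f₁))
  ∧ (∀ (X : B) (g₁ : X ⟶ A₂) (g₂ : X ⟶ A₁) (η : g₁ ≫ f₂ ⟶ g₂ ≫ f₁)
      (g g' : X ⟶ P) (ξ₁ : g ≫ p₁ ⟶ g₁) (ξ₂ : g ≫ p₂ ⟶ g₂)
      (ξ₁' : g' ≫ p₁ ⟶ g₁) (ξ₂' : g' ≫ p₂ ⟶ g₂),
      ((ξ₁ ▷ f₂) ≫ η = (α_ g p₁ f₂).hom ≫ (g ◁ ξ) ≫ (α_ g p₂ f₁).inv ≫ (ξ₂ ▷ f₁)) →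
      ((ξ₁' ▷ f₂) ≫ η = (α_ g' p₁ f₂).hom ≫ (g' ◁ ξ) ≫ (α_ g' p₂ f₁).inv ≫ (ξ₂' ▷ f₁)) →
      ∃! ζ : g ⟶ g', ((ζ ▷ p₁) ≫ ξ₁' = ξ₁) ∧ ((ζ ▷ p₂) ≫ ξ₂' = ξ₂))

end Defs

/-- A locally SCG 2-category: each hom-category is a symmetric categorical group,
`Hom` is a 2-functor into SCG (expressed through the zero 1-cells, the unit
constraints `sharp`/`flat` of the monoidal functors `f ∘ −`, `− ∘ f` and their
coherence), there is a zero object, and binary (co)products exist. -/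
structure LocSCG (B : Type u) [Bicategory.{w, v} B] where
  /-- symmetric monoidal structure on each hom-category -/
  monStr : ∀ A C : B, MonoidalCategory (A ⟶ C)
  symm : ∀ A C : B, @SymmetricCategory (A ⟶ C) _ (monStr A C)
  /-- every 2-cell is invertible -/
  cellIso : ∀ {A C : B} {f g : A ⟶ C} (η : f ⟶ g), IsIso η
  /-- every 1-cell is ⊗-invertible up to an isomorphism -/
  objInv : ∀ {A C : B} (f : A ⟶ C),
    ∃ g : A ⟶ C, Nonempty (mtens (monStr A C) f g ≅ munit (monStr A C))
  /-- zero 1-cells compose to zero 1-cells -/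
  zero_comp : ∀ A C E : B, munit (monStr A C) ≫ munit (monStr C E) = munit (monStr A E)
  /-- unit constraint `f_I^♯ : f ∘ 0 ⟶ 0` of the monoidal functor `f ∘ −` -/
  sharp : ∀ {A C E : B} (f : A ⟶ C), f ≫ munit (monStr C E) ≅ munit (monStr A E)
  /-- unit constraint `f_I^♭ : 0 ∘ f ⟶ 0` of the monoidal functor `− ∘ f` -/
  flat : ∀ {A C E : B} (f : C ⟶ E), munit (monStr A C) ≫ f ≅ munit (monStr A E)
  sharp_natural : ∀ {A C E : B} {f g : A ⟶ C} (η : f ⟶ g),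
    (η ▷ munit (monStr C E)) ≫ (sharp g).hom = (sharp f).hom
  flat_natural : ∀ {A C E : B} {f g : C ⟶ E} (η : f ⟶ g),
    (munit (monStr A C) ◁ η) ≫ (flat g).hom = (flat f).hom
  /-- unit constraints of zero 1-cells are identities -/
  sharp_zero : ∀ A C E : B,
    (sharp (E := E) (munit (monStr A C))).hom = eqToHom (zero_comp A C E)
  flat_zero : ∀ A C E : B,
    (flat (A := A) (munit (monStr C E))).hom = eqToHom (zero_comp A C E)
  sharp_comp : ∀ {A C E G : B} (f : A ⟶ C) (g : C ⟶ E),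
    (sharp (E := G) (f ≫ g)).hom
      = (α_ f g (munit (monStr E G))).hom ≫ (f ◁ (sharp g).hom) ≫ (sharp f).hom
  flat_comp : ∀ {X A C E : B} (f : A ⟶ C) (g : C ⟶ E),
    (flat (A := X) (f ≫ g)).hom
      = (α_ (munit (monStr X A)) f g).inv ≫ ((flat f).hom ▷ g) ≫ (flat g).hom
  sharp_flat : ∀ {A C E G : B} (f : A ⟶ C) (g : E ⟶ G),
    ((sharp f).hom ▷ g) ≫ (flat g).hom
      = (α_ f (munit (monStr C E)) g).hom ≫ (f ◁ (flat g).hom) ≫ (sharp f).hom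
  /-- tensor constraint of the monoidal functor `k ∘ −` -/
  sharpTensor : ∀ {X A C : B} (k : X ⟶ A) (g h : A ⟶ C),
    k ≫ mtens (monStr A C) g h ≅ mtens (monStr X C) (k ≫ g) (k ≫ h)
  /-- tensor constraint of the monoidal functor `− ∘ k` -/
  flatTensor : ∀ {A C E : B} (k : C ⟶ E) (g h : A ⟶ C),
    mtens (monStr A C) g h ≫ k ≅ mtens (monStr A E) (g ≫ k) (h ≫ k)
  /-- the zero object -/
  zObj : B
  homZZ : ∀ f : zObj ⟶ zObj, f = munit (monStr zObj zObj)
  cellZZ : ∀ (f g : zObj ⟶ zObj) (η θ : f ⟶ g), η = θ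
  toZero : ∀ {A : B} (f : A ⟶ zObj), f ⟶ munit (monStr A zObj)
  toZero_unique : ∀ {A : B} (f : A ⟶ zObj) (η θ : f ⟶ munit (monStr A zObj)), η = θ
  fromZero : ∀ {A : B} (f : zObj ⟶ A), f ⟶ munit (monStr zObj A)
  fromZero_unique : ∀ {A : B} (f : zObj ⟶ A) (η θ : f ⟶ munit (monStr zObj A)), η = θ
  hasProd : ∀ A₁ A₂ : B, ∃ (P : B) (p₁ : P ⟶ A₁) (p₂ : P ⟶ A₂), IsProduct2 A₁ A₂ P p₁ p₂
  hasCoprod : ∀ A₁ A₂ : B, ∃ (P : B) (i₁ : A₁ ⟶ P) (i₂ : A₂ ⟶ P), IsCoproduct2 A₁ A₂ P i₁ i₂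

namespace LocSCG

variable {B : Type u} [Bicategory.{w, v} B]

/-- the zero 1-cell `0_{A,C}`. -/
def zro (S : LocSCG B) (A C : B) : A ⟶ C := munit (S.monStr A C)

/-- tensor product of parallel 1-cells in a hom-category. -/
def tens (S : LocSCG B) {A C : B} (f g : A ⟶ C) : A ⟶ C := mtens (S.monStr A C) f g

/-- tensor product of 2-cells in a hom-category. -/
def tensHom (S : LocSCG B) {A C : B} {f₁ g₁ f₂ g₂ : A ⟶ C} (η : f₁ ⟶ g₁) (θ : f₂ ⟶ g₂) :
    S.tens f₁ f₂ ⟶ S.tens g₁ g₂ :=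
  @MonoidalCategoryStruct.tensorHom _ _ (S.monStr A C).toMonoidalCategoryStruct _ _ _ _ η θ

/-- associator of the hom-category monoidal structure. -/
def tassoc (S : LocSCG B) {A C : B} (f g h : A ⟶ C) :
    S.tens (S.tens f g) h ≅ S.tens f (S.tens g h) :=
  @MonoidalCategoryStruct.associator _ _ (S.monStr A C).toMonoidalCategoryStruct f g h

/-- left unitor of the hom-category monoidal structure. -/
def tlunit (S : LocSCG B) {A C : B} (f : A ⟶ C) : S.tens (S.zro A C) f ≅ f :=
  @MonoidalCategoryStruct.leftUnitor _ _ (S.monStr A C).toMonoidalCategoryStruct f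

/-- right unitor of the hom-category monoidal structure. -/
def trunit (S : LocSCG B) {A C : B} (f : A ⟶ C) : S.tens f (S.zro A C) ≅ f :=
  @MonoidalCategoryStruct.rightUnitor _ _ (S.monStr A C).toMonoidalCategoryStruct f

/-- inverse of a 2-cell. -/
noncomputable def inv2 (S : LocSCG B) {A C : B} {f g : A ⟶ C} (η : f ⟶ g) : g ⟶ f :=
  @CategoryTheory.inv _ _ _ _ η (S.cellIso η)

variable (S : LocSCG B)

/-- `(K, k, ε)` is a (2-universal) kernel of `f`. -/
def IsKernel {A C : B} (f : A ⟶ C) (K : B) (k : K ⟶ A) (ε₀ : k ≫ f ⟶ S.zro K C) : Prop :=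
  (∀ (X : B) (x : X ⟶ A) (e : x ≫ f ⟶ S.zro X C),
    ∃ (x' : X ⟶ K) (e' : x' ≫ k ⟶ x),
      (e' ▷ f) ≫ e = (α_ x' k f).hom ≫ (x' ◁ ε₀) ≫ (S.sharp x').hom)
  ∧ (∀ (X : B) (x : X ⟶ A) (e : x ≫ f ⟶ S.zro X C)
      (x₁ x₂ : X ⟶ K) (e₁ : x₁ ≫ k ⟶ x) (e₂ : x₂ ≫ k ⟶ x),
      ((e₁ ▷ f) ≫ e = (α_ x₁ k f).hom ≫ (x₁ ◁ ε₀) ≫ (S.sharp x₁).hom) →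
      ((e₂ ▷ f) ≫ e = (α_ x₂ k f).hom ≫ (x₂ ◁ ε₀) ≫ (S.sharp x₂).hom) →
      ∃! η : x₁ ⟶ x₂, (η ▷ k) ≫ e₂ = e₁)

/-- `(Q, c, π)` is a (2-universal) cokernel of `f`. -/
def IsCokernel {A C : B} (f : A ⟶ C) (Q : B) (c : C ⟶ Q) (π : f ≫ c ⟶ S.zro A Q) : Prop :=
  (∀ (X : B) (x : C ⟶ X) (e : f ≫ x ⟶ S.zro A X),
    ∃ (x' : Q ⟶ X) (e' : c ≫ x' ⟶ x),
      (f ◁ e') ≫ e = (α_ f c x').inv ≫ (π ▷ x') ≫ (S.flat x').hom)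
  ∧ (∀ (X : B) (x : C ⟶ X) (e : f ≫ x ⟶ S.zro A X)
      (x₁ x₂ : Q ⟶ X) (e₁ : c ≫ x₁ ⟶ x) (e₂ : c ≫ x₂ ⟶ x),
      ((f ◁ e₁) ≫ e = (α_ f c x₁).inv ≫ (π ▷ x₁) ≫ (S.flat x₁).hom) →
      ((f ◁ e₂) ≫ e = (α_ f c x₂).inv ≫ (π ▷ x₂) ≫ (S.flat x₂).hom) →
      ∃! η : x₁ ⟶ x₂, (c ◁ η) ≫ e₂ = e₁)

/-- compatibility of a candidate `(x, e)` with `φ` (relative kernel condition). -/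
def RelKerCompat {X A C E : B} (f : A ⟶ C) (g : C ⟶ E) (φ : f ≫ g ⟶ S.zro A E)
    (x : X ⟶ A) (e : x ≫ f ⟶ S.zro X C) : Prop :=
  (α_ x f g).hom ≫ (x ◁ φ) ≫ (S.sharp x).hom = (e ▷ g) ≫ (S.flat g).hom

/-- `(K, k, ε)` is a (2-universal) relative kernel `Ker(f, φ)` of `f : A ⟶ C`
relative to `g : C ⟶ E`, `φ : f ∘ g ⟶ 0`. -/
def IsRelKernel {A C E : B} (f : A ⟶ C) (g : C ⟶ E) (φ : f ≫ g ⟶ S.zro A E)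
    (K : B) (k : K ⟶ A) (ε₀ : k ≫ f ⟶ S.zro K C) : Prop :=
  S.RelKerCompat f g φ k ε₀
  ∧ (∀ (X : B) (x : X ⟶ A) (e : x ≫ f ⟶ S.zro X C), S.RelKerCompat f g φ x e →
      ∃ (x' : X ⟶ K) (e' : x' ≫ k ⟶ x),
        (e' ▷ f) ≫ e = (α_ x' k f).hom ≫ (x' ◁ ε₀) ≫ (S.sharp x').hom)
  ∧ (∀ (X : B) (x : X ⟶ A) (e : x ≫ f ⟶ S.zro X C), S.RelKerCompat f g φ x e →
      ∀ (x₁ x₂ : X ⟶ K) (e₁ : x₁ ≫ k ⟶ x) (e₂ : x₂ ≫ k ⟶ x),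
        ((e₁ ▷ f) ≫ e = (α_ x₁ k f).hom ≫ (x₁ ◁ ε₀) ≫ (S.sharp x₁).hom) →
        ((e₂ ▷ f) ≫ e = (α_ x₂ k f).hom ≫ (x₂ ◁ ε₀) ≫ (S.sharp x₂).hom) →
        ∃! η : x₁ ⟶ x₂, (η ▷ k) ≫ e₂ = e₁)

/-- compatibility of a candidate `(x, e)` with `φ` (relative cokernel condition). -/
def RelCokCompat {A C E X : B} (f : A ⟶ C) (g : C ⟶ E) (φ : f ≫ g ⟶ S.zro A E)
    (x : E ⟶ X) (e : g ≫ x ⟶ S.zro C X) : Prop :=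
  (φ ▷ x) ≫ (S.flat x).hom = (α_ f g x).hom ≫ (f ◁ e) ≫ (S.sharp f).hom

/-- `(Q, c, π)` is a (2-universal) relative cokernel `Cok(g, φ)` of `g : C ⟶ E`
relative to `f : A ⟶ C`, `φ : f ∘ g ⟶ 0`. -/
def IsRelCokernel {A C E : B} (f : A ⟶ C) (g : C ⟶ E) (φ : f ≫ g ⟶ S.zro A E)
    (Q : B) (c : E ⟶ Q) (π : g ≫ c ⟶ S.zro C Q) : Prop :=
  S.RelCokCompat f g φ c π
  ∧ (∀ (X : B) (x : E ⟶ X) (e : g ≫ x ⟶ S.zro C X), S.RelCokCompat f g φ x e →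
      ∃ (x' : Q ⟶ X) (e' : c ≫ x' ⟶ x),
        (g ◁ e') ≫ e = (α_ g c x').inv ≫ (π ▷ x') ≫ (S.flat x').hom)
  ∧ (∀ (X : B) (x : E ⟶ X) (e : g ≫ x ⟶ S.zro C X), S.RelCokCompat f g φ x e →
      ∀ (x₁ x₂ : Q ⟶ X) (e₁ : c ≫ x₁ ⟶ x) (e₂ : c ≫ x₂ ⟶ x),
        ((g ◁ e₁) ≫ e = (α_ g c x₁).inv ≫ (π ▷ x₁) ≫ (S.flat x₁).hom) →
        ((g ◁ e₂) ≫ e = (α_ g c x₂).inv ≫ (π ▷ x₂) ≫ (S.flat x₂).hom) →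
        ∃! η : x₁ ⟶ x₂, (c ◁ η) ≫ e₂ = e₁)

/-- a 0-cell is zero if it is equivalent to the zero object. -/
def ZeroEq (X : B) : Prop := ∃ e : X ⟶ S.zObj, Is2Equiv e

/-- 2-exactness of `(f, g, φ)` in the middle 0-cell: the cokernel of the induced
factorization of `f` through any kernel of `g` is zero. -/
def TwoExact {A C E : B} (f : A ⟶ C) (g : C ⟶ E) (φ : f ≫ g ⟶ S.zro A E) : Prop :=
  ∀ (K : B) (k : K ⟶ C) (ε₀ : k ≫ g ⟶ S.zro K E), S.IsKernel g K k ε₀ →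
  ∀ (fb : A ⟶ K) (φb : fb ≫ k ⟶ f),
    ((φb ▷ g) ≫ φ = (α_ fb k g).hom ≫ (fb ◁ ε₀) ≫ (S.sharp fb).hom) →
    S.IsCokernel fb S.zObj (S.zro K S.zObj) (S.sharp fb).hom

/-- relative 2-exactness at the middle 0-cell `A₂` of a 5-term window
`A₀ → A₁ → A₂ → A₃ → A₄` of a complex: the relative cohomology
`H = Cok(k, ν₂)` is equivalent to the zero object. -/
def RelTwoExactWindow {A₀ A₁ A₂ A₃ A₄ : B}
    (d₀ : A₀ ⟶ A₁) (d₁ : A₁ ⟶ A₂) (d₂ : A₂ ⟶ A₃) (d₃ : A₃ ⟶ A₄)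
    (δ₁ : d₀ ≫ d₁ ⟶ S.zro A₀ A₂) (δ₂ : d₁ ≫ d₂ ⟶ S.zro A₁ A₃)
    (δ₃ : d₂ ≫ d₃ ⟶ S.zro A₂ A₄) : Prop :=
  ∀ (Z : B) (z : Z ⟶ A₂) (ζ : z ≫ d₂ ⟶ S.zro Z A₃),
    S.IsRelKernel d₂ d₃ δ₃ Z z ζ →
  ∀ (k : A₁ ⟶ Z) (ν₁ : k ≫ z ⟶ d₁) (ν₂ : d₀ ≫ k ⟶ S.zro A₀ Z),
    ((ν₁ ▷ d₂) ≫ δ₂ = (α_ k z d₂).hom ≫ (k ◁ ζ) ≫ (S.sharp k).hom) →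
    ((α_ d₀ k z).hom ≫ (d₀ ◁ ν₁) ≫ δ₁ = (ν₂ ▷ z) ≫ (S.flat z).hom) →
  ∀ (H : B) (c : Z ⟶ H) (π : k ≫ c ⟶ S.zro A₁ H),
    S.IsRelCokernel d₀ k ν₂ H c π → S.ZeroEq H

end LocSCG

/-- The remaining axioms of a relatively exact 2-category: existence of kernels and
cokernels, and the characterization of (co)faithful 1-cells. -/
structure IsRelExact {B : Type u} [Bicategory.{w, v} B] (S : LocSCG B) : Prop where
  hasKer : ∀ {A C : B} (f : A ⟶ C),
    ∃ (K : B) (k : K ⟶ A) (ε₀ : k ≫ f ⟶ S.zro K C), S.IsKernel f K k ε₀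
  hasCok : ∀ {A C : B} (f : A ⟶ C),
    ∃ (Q : B) (c : C ⟶ Q) (π : f ≫ c ⟶ S.zro A Q), S.IsCokernel f Q c π
  faithful_iff : ∀ {A C : B} (f : A ⟶ C) (Q : B) (c : C ⟶ Q) (π : f ≫ c ⟶ S.zro A Q),
    S.IsCokernel f Q c π → (CFaithful f ↔ S.IsKernel c A f π)
  cofaithful_iff : ∀ {A C : B} (f : A ⟶ C) (K : B) (k : K ⟶ A) (ε₀ : k ≫ f ⟶ S.zro K C),
    S.IsKernel f K k ε₀ → (CCofaithful f ↔ S.IsCokernel k C f ε₀)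

/-- A (cochain) complex in a locally SCG 2-category. -/
structure Cpx {B : Type u} [Bicategory.{w, v} B] (S : LocSCG B) where
  X : ℤ → B
  d : ∀ n : ℤ, X n ⟶ X (n + 1)
  δ : ∀ n : ℤ, d n ≫ d (n + 1) ⟶ S.zro (X n) (X (n + 1 + 1))
  compat : ∀ n : ℤ,
    (α_ (d n) (d (n + 1)) (d (n + 1 + 1))).hom ≫ (d n ◁ δ (n + 1)) ≫ (S.sharp (d n)).hom
      = (δ n ▷ d (n + 1 + 1)) ≫ (S.flat (d (n + 1 + 1))).hom

/-- A morphism of complexes. -/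
structure CpxMor {B : Type u} [Bicategory.{w, v} B] (S : LocSCG B) (A₁ A₂ : Cpx S) where
  f : ∀ n : ℤ, A₁.X n ⟶ A₂.X n
  lam : ∀ n : ℤ, A₁.d n ≫ f (n + 1) ⟶ f n ≫ A₂.d n
  compat : ∀ n : ℤ,
    (A₁.δ n ▷ f (n + 1 + 1)) ≫ (S.flat (f (n + 1 + 1))).hom
      = (α_ (A₁.d n) (A₁.d (n + 1)) (f (n + 1 + 1))).hom ≫ (A₁.d n ◁ lam (n + 1))
          ≫ (α_ (A₁.d n) (f (n + 1)) (A₂.d (n + 1))).inv ≫ (lam n ▷ A₂.d (n + 1))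
          ≫ (α_ (f n) (A₂.d n) (A₂.d (n + 1))).hom ≫ (f n ◁ A₂.δ n) ≫ (S.sharp (f n)).hom

/-- An extension of complexes: degreewise an extension, with compatible 2-cells. -/
def IsCpxExtension {B : Type u} [Bicategory.{w, v} B] (S : LocSCG B) {A₁ A₂ A₃ : Cpx S}
    (F : CpxMor S A₁ A₂) (G : CpxMor S A₂ A₃)
    (φ : ∀ n : ℤ, F.f n ≫ G.f n ⟶ S.zro (A₁.X n) (A₃.X n)) : Prop :=
  (∀ n : ℤ, S.IsKernel (G.f n) (A₁.X n) (F.f n) (φ n)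
      ∧ S.IsCokernel (F.f n) (A₃.X n) (G.f n) (φ n))
  ∧ (∀ n : ℤ,
      (F.lam n ▷ G.f (n + 1)) ≫ (α_ (F.f n) (A₂.d n) (G.f (n + 1))).hom
          ≫ (F.f n ◁ G.lam n) ≫ (α_ (F.f n) (G.f n) (A₃.d n)).inv
          ≫ (φ n ▷ A₃.d n) ≫ (S.flat (A₃.d n)).hom
        = (α_ (A₁.d n) (F.f (n + 1)) (G.f (n + 1))).hom ≫ (A₁.d n ◁ φ (n + 1))
            ≫ (S.sharp (A₁.d n)).hom)

/-- A witness for the (relative) cohomology `H = Cok(k, ν₂)` of a complex at the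
0-cell `X (m + 2)`. -/
structure HWitness {B : Type u} [Bicategory.{w, v} B] (S : LocSCG B) (A : Cpx S) (m : ℤ) where
  Z : B
  z : Z ⟶ A.X (m + 1 + 1)
  ζ : z ≫ A.d (m + 1 + 1) ⟶ S.zro Z (A.X (m + 1 + 1 + 1))
  isZ : S.IsRelKernel (A.d (m + 1 + 1)) (A.d (m + 1 + 1 + 1)) (A.δ (m + 1 + 1)) Z z ζ
  k : A.X (m + 1) ⟶ Z
  ν₁ : k ≫ z ⟶ A.d (m + 1)
  ν₂ : A.d m ≫ k ⟶ S.zro (A.X m) Z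
  hν₁ : (ν₁ ▷ A.d (m + 1 + 1)) ≫ A.δ (m + 1)
      = (α_ k z (A.d (m + 1 + 1))).hom ≫ (k ◁ ζ) ≫ (S.sharp k).hom
  hν₂ : (α_ (A.d m) k z).hom ≫ (A.d m ◁ ν₁) ≫ A.δ m = (ν₂ ▷ z) ≫ (S.flat z).hom
  H : B
  c : Z ⟶ H
  π : k ≫ c ⟶ S.zro (A.X (m + 1)) H
  isH : S.IsRelCokernel (A.d m) k ν₂ H c π

/-! ### Auxiliary material for `stmt5` -/

section Stmt5Aux

variable {B : Type u} [Bicategory.{w, v} B]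

/-- postcomposition functor on hom-categories. -/
@[simps] def postcompF {A C : B} (f : A ⟶ C) (X : B) : (X ⟶ A) ⥤ (X ⟶ C) where
  obj h := h ≫ f
  map η := η ▷ f

/-- precomposition functor on hom-categories. -/
@[simps] def precompF {A C : B} (f : A ⟶ C) (X : B) : (C ⟶ X) ⥤ (A ⟶ X) where
  obj h := f ≫ h
  map η := f ◁ η

/-- the hom-category equivalence induced by postcomposition with an equivalence. -/
noncomputable def postEquiv {A C : B} (f : A ⟶ C) (g : C ⟶ A)
    (i₁ : f ≫ g ≅ 𝟙 A) (i₂ : g ≫ f ≅ 𝟙 C) (X : B) : (X ⟶ A) ≌ (X ⟶ C) :=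
  CategoryTheory.Equivalence.mk (postcompF f X) (postcompF g X)
    (NatIso.ofComponents (fun h => (α_ h f g ≪≫ whiskerLeftIso h i₁ ≪≫ ρ_ h).symm)
      (by intro h h' η
          dsimp [postcompF]
          simp
          rw [← associator_inv_naturality_left, whisker_exchange_assoc,
            rightUnitor_inv_naturality_assoc]))
    (NatIso.ofComponents (fun h => α_ h g f ≪≫ whiskerLeftIso h i₂ ≪≫ ρ_ h)
      (by intro h h' η
          dsimp [postcompF]
          simp
          rw [associator_naturality_left_assoc, ← whisker_exchange_assoc,
            rightUnitor_naturality]))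

/-- the hom-category equivalence induced by precomposition with an equivalence. -/
noncomputable def preEquiv {A C : B} (f : A ⟶ C) (g : C ⟶ A)
    (i₁ : f ≫ g ≅ 𝟙 A) (i₂ : g ≫ f ≅ 𝟙 C) (X : B) : (C ⟶ X) ≌ (A ⟶ X) :=
  CategoryTheory.Equivalence.mk (precompF f X) (precompF g X)
    (NatIso.ofComponents (fun h => ((α_ g f h).symm ≪≫ whiskerRightIso i₂ h ≪≫ λ_ h).symm)
      (by intro h h' η
          dsimp [precompF]
          simp
          rw [← associator_naturality_right, ← whisker_exchange_assoc,
            leftUnitor_inv_naturality_assoc]))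
    (NatIso.ofComponents (fun h => (α_ f g h).symm ≪≫ whiskerRightIso i₁ h ≪≫ λ_ h)
      (by intro h h' η
          dsimp [precompF]
          simp
          rw [associator_inv_naturality_right_assoc, whisker_exchange_assoc,
            leftUnitor_naturality]))

variable [Bicategory.Strict B] (S : LocSCG B)

lemma flat_congr {A C E : B} {u v : C ⟶ E} (h : u = v) :
    (S.flat (A := A) u).hom
      = eqToHom (by rw [h]) ≫ (S.flat v).hom := by
  subst h; simp

lemma sharp_congr {A C E : B} {u v : A ⟶ C} (h : u = v) :
    (S.sharp (E := E) u).hom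
      = eqToHom (by rw [h]) ≫ (S.sharp v).hom := by
  subst h; simp

lemma flat_id (K C : B) :
    (S.flat (A := K) (𝟙 C)).hom = eqToHom (Category.comp_id _) := by
  have h := S.flat_comp (X := K) (𝟙 C) (𝟙 C)
  rw [flat_congr S (Category.comp_id (𝟙 C))] at h
  simp only [Bicategory.whiskerRight_id, Bicategory.Strict.rightUnitor_eqToIso,
    Bicategory.Strict.associator_eqToIso, eqToIso.hom, eqToIso.inv, Category.assoc,
    eqToHom_trans, eqToHom_trans_assoc, eqToHom_refl, Category.id_comp, Category.comp_id] at h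
  rw [cancel_epi] at h
  conv at h => lhs; rw [← Category.comp_id ((S.flat (𝟙 C)).hom)]
  rw [cancel_epi] at h
  rw [← cancel_epi (eqToHom (Category.comp_id (munit (S.monStr K C))).symm), ← h]
  simp

lemma sharp_id (A X : B) :
    (S.sharp (E := X) (𝟙 A)).hom = eqToHom (Category.id_comp _) := by
  have h := S.sharp_comp (G := X) (𝟙 A) (𝟙 A)
  rw [sharp_congr S (Category.id_comp (𝟙 A))] at h
  simp only [whiskerLeft_eqToHom, Bicategory.Strict.associator_eqToIso, eqToIso.hom,
    eqToIso.inv, Category.assoc, eqToHom_trans, eqToHom_trans_assoc, eqToHom_refl,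
    Category.id_comp, Category.comp_id, id_whiskerLeft, Bicategory.Strict.leftUnitor_eqToIso] at h
  rw [cancel_epi] at h
  conv at h => lhs; rw [← Category.comp_id ((S.sharp (𝟙 A)).hom)]
  rw [cancel_epi] at h
  rw [← cancel_epi (eqToHom (Category.id_comp (munit (S.monStr A X))).symm), ← h]
  simp

lemma equiv_of_cok {K A C : B} (k : K ⟶ A) (f : A ⟶ C) (ε₀ : k ≫ f ⟶ S.zro K C)
    (hcok : S.IsCokernel k C f ε₀) (θ : k ⟶ S.zro K A)
    (hθ : (θ ▷ f) ≫ (S.flat f).hom = ε₀) : Is2Equiv f := by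
  change k ≫ f ⟶ munit (S.monStr K C) at ε₀
  change k ⟶ munit (S.monStr K A) at θ
  replace hθ : (θ ▷ f) ≫ (S.flat f).hom = ε₀ := hθ
  obtain ⟨g, e', hg⟩ := hcok.1 A (𝟙 A) (eqToHom (Category.comp_id k) ≫ θ)
  replace hg : (k ◁ e') ≫ (eqToHom (Category.comp_id k) ≫ θ) = (α_ k f g).inv ≫ (ε₀ ▷ g) ≫ (S.flat g).hom := hg
  have h1 : (k ◁ (eqToHom (Category.comp_id f) : f ≫ 𝟙 C ⟶ f)) ≫ ε₀
      = (α_ k f (𝟙 C)).inv ≫ (ε₀ ▷ 𝟙 C) ≫ (S.flat (𝟙 C)).hom := by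
    simp [whiskerLeft_eqToHom, Bicategory.whiskerRight_id, Bicategory.Strict.rightUnitor_eqToIso, Bicategory.Strict.associator_eqToIso, flat_id S]
  have h2 : (k ◁ ((eqToHom (Category.assoc f g f).symm ≫ (e' ▷ f)
        ≫ eqToHom (Category.id_comp f)) : f ≫ (g ≫ f) ⟶ f)) ≫ ε₀
      = (α_ k f (g ≫ f)).inv ≫ (ε₀ ▷ (g ≫ f)) ≫ (S.flat (g ≫ f)).hom := by
    have key := congrArg (fun t => t ▷ f ≫ (S.flat f).hom) hg
    simp only [comp_whiskerRight, Category.assoc, eqToHom_whiskerRight, whiskerLeft_eqToHom, whisker_assoc, Bicategory.whiskerRight_comp, Bicategory.whiskerLeft_comp, comp_whiskerLeft, Bicategory.Strict.associator_eqToIso, eqToIso.hom, eqToIso.inv, eqToHom_trans, eqToHom_trans_assoc, eqToHom_refl, Category.id_comp, Category.comp_id] at key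
    rw [hθ] at key
    rw [S.flat_comp g f]
    simp only [comp_whiskerRight, Category.assoc, eqToHom_whiskerRight, whiskerLeft_eqToHom, whisker_assoc, Bicategory.whiskerRight_comp, Bicategory.whiskerLeft_comp, comp_whiskerLeft, Bicategory.Strict.associator_eqToIso, eqToIso.hom, eqToIso.inv, eqToHom_trans, eqToHom_trans_assoc, eqToHom_refl, Category.id_comp, Category.comp_id]
    have key2 := congrArg (fun t => eqToHom (show (k ≫ f ≫ g ≫ f : K ⟶ C) = (k ≫ (f ≫ g)) ≫ f from by simp) ≫ t) key
    simp only [Category.assoc, eqToHom_trans_assoc, eqToHom_refl, Category.id_comp] at key2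
    exact key2
  obtain ⟨η, -, -⟩ := hcok.2 C f ε₀ (𝟙 C) (g ≫ f) _ _ h1 h2
  letI := S.cellIso e'
  letI := S.cellIso η
  exact ⟨g, ⟨asIso e'⟩, ⟨(asIso η).symm⟩⟩

lemma equiv_of_ker {A C Q : B} (f : A ⟶ C) (c : C ⟶ Q) (π : f ≫ c ⟶ S.zro A Q)
    (hker : S.IsKernel c A f π) (θ : c ⟶ S.zro C Q)
    (hθ : (f ◁ θ) ≫ (S.sharp f).hom = π) : Is2Equiv f := by
  change f ≫ c ⟶ munit (S.monStr A Q) at π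
  change c ⟶ munit (S.monStr C Q) at θ
  replace hθ : (f ◁ θ) ≫ (S.sharp f).hom = π := hθ
  obtain ⟨g, e', hg⟩ := hker.1 C (𝟙 C) (eqToHom (Category.id_comp c) ≫ θ)
  replace hg : (e' ▷ c) ≫ (eqToHom (Category.id_comp c) ≫ θ) = (α_ g f c).hom ≫ (g ◁ π) ≫ (S.sharp g).hom := hg
  have h1 : ((eqToHom (Category.id_comp f) : 𝟙 A ≫ f ⟶ f) ▷ c) ≫ π
      = (α_ (𝟙 A) f c).hom ≫ (𝟙 A ◁ π) ≫ (S.sharp (𝟙 A)).hom := by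
    simp [eqToHom_whiskerRight, id_whiskerLeft, Bicategory.Strict.leftUnitor_eqToIso, Bicategory.Strict.associator_eqToIso, sharp_id S]
  have h2 : (((eqToHom (Category.assoc f g f) ≫ (f ◁ e')
        ≫ eqToHom (Category.comp_id f)) : (f ≫ g) ≫ f ⟶ f) ▷ c) ≫ π
      = (α_ (f ≫ g) f c).hom ≫ ((f ≫ g) ◁ π) ≫ (S.sharp (f ≫ g)).hom := by
    have key := congrArg (fun t => (f ◁ t) ≫ (S.sharp f).hom) hg
    simp only [comp_whiskerRight, Category.assoc, eqToHom_whiskerRight, whiskerLeft_eqToHom, whisker_assoc, Bicategory.whiskerRight_comp, Bicategory.whiskerLeft_comp, comp_whiskerLeft, Bicategory.Strict.associator_eqToIso, eqToIso.hom, eqToIso.inv, eqToHom_trans, eqToHom_trans_assoc, eqToHom_refl, Category.id_comp, Category.comp_id] at key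
    rw [hθ] at key
    rw [S.sharp_comp f g]
    simp only [comp_whiskerRight, Category.assoc, eqToHom_whiskerRight, whiskerLeft_eqToHom, whisker_assoc, Bicategory.whiskerRight_comp, Bicategory.whiskerLeft_comp, comp_whiskerLeft, Bicategory.Strict.associator_eqToIso, eqToIso.hom, eqToIso.inv, eqToHom_trans, eqToHom_trans_assoc, eqToHom_refl, Category.id_comp, Category.comp_id]
    have key2 := congrArg (fun t => eqToHom (show (((f ≫ g) ≫ f) ≫ c : A ⟶ Q) = f ≫ (g ≫ f) ≫ c from by simp) ≫ t) key
    simp only [Category.assoc, eqToHom_trans_assoc, eqToHom_refl, Category.id_comp] at key2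
    exact key2
  obtain ⟨η, -, -⟩ := hker.2 A f π (𝟙 A) (f ≫ g) _ _ h1 h2
  letI := S.cellIso e'
  letI := S.cellIso η
  exact ⟨g, ⟨(asIso η).symm⟩, ⟨asIso e'⟩⟩

end Stmt5Aux

/-- a 1-cell is an equivalence iff it is cofaithful and fully faithful,
iff it is faithful and fully cofaithful. -/
theorem stmt5 {B : Type u} [Bicategory.{w, v} B] [Bicategory.Strict B]
    (S : LocSCG B) (hS : IsRelExact S)
    {A C : B} (f : A ⟶ C) :
    (Is2Equiv f ↔ (CCofaithful f ∧ CFullyFaithful f))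
      ∧ (Is2Equiv f ↔ (CFaithful f ∧ CFullyCofaithful f)) := by
  have fwd : Is2Equiv f → CCofaithful f ∧ CFullyFaithful f ∧ CFaithful f ∧ CFullyCofaithful f := by
    rintro ⟨g, ⟨i₁⟩, ⟨i₂⟩⟩
    refine ⟨?_, ⟨?_, ?_⟩, ?_, ?_, ?_⟩
    · intro X u v η θ h
      exact ((preEquiv f g i₁ i₂ X).functor).map_injective h
    · intro X u v η θ h
      exact ((postEquiv f g i₁ i₂ X).functor).map_injective h
    · intro X u v μ
      exact ((postEquiv f g i₁ i₂ X).functor).map_surjective μ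
    · intro X u v η θ h
      exact ((postEquiv f g i₁ i₂ X).functor).map_injective h
    · intro X u v η θ h
      exact ((preEquiv f g i₁ i₂ X).functor).map_injective h
    · intro X u v μ
      exact ((preEquiv f g i₁ i₂ X).functor).map_surjective μ
  constructor
  · constructor
    · intro h; exact ⟨(fwd h).1, (fwd h).2.1⟩
    · rintro ⟨hco, hff⟩
      obtain ⟨K, k, ε₀, hker⟩ := hS.hasKer f
      have hcok := (hS.cofaithful_iff f K k ε₀ hker).mp hco
      obtain ⟨θ, hθ⟩ := hff.2 k (S.zro K A) (ε₀ ≫ (S.flat f).inv)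
      refine equiv_of_cok S k f ε₀ hcok θ ?_
      rw [hθ]; erw [Category.assoc, Iso.inv_hom_id, Category.comp_id]
  · constructor
    · intro h; exact ⟨(fwd h).2.2.1, (fwd h).2.2.2⟩
    · rintro ⟨hfa, hfc⟩
      obtain ⟨Q, c, π, hcok⟩ := hS.hasCok f
      have hker := (hS.faithful_iff f Q c π hcok).mp hfa
      obtain ⟨θ, hθ⟩ := hfc.2 c (S.zro C Q) (π ≫ (S.sharp f).inv)
      refine equiv_of_ker S f c π hker θ ?_
      rw [hθ]; erw [Category.assoc, Iso.inv_hom_id, Category.comp_id]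
end

section
/- A 1-cell f: A→B in S is faithful if and only if the relative kernel Ker(0_{0,A}, f_I^♭) = 0, i.e. if and only if the zero object, equipped with the zero 1-cell into 0 and the canonical 2-cell, is a relative kernel of the pair (0_{0,A}: 0→A, f_I^♭: 0_{0,A}∘f ⟹ 0_{0,B}). -/
/-!
Common framework: relatively exact 2-categories (after Nakaoka,
"Cohomology theory in 2-categories").
-/

open CategoryTheory Bicategory

universe w v u

section Stmt8Aux

open CategoryTheory Bicategory

universe w₁ v₁ u₁

variable {B : Type u₁} [Bicategory.{w₁, v₁} B]

private lemma cancelR {C : Type*} [Category C] {x y z : C} (m : y ⟶ z) [IsIso m]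
    {q q' : x ⟶ y} (h : q ≫ m = q' ≫ m) : q = q' := by
  have := congrArg (fun t => t ≫ CategoryTheory.inv m) h
  simpa using this

private lemma cancelL {C : Type*} [Category C] {x y z : C} (m : x ⟶ y) [IsIso m]
    {q q' : y ⟶ z} (h : m ≫ q = m ≫ q') : q = q' := by
  have := congrArg (fun t => CategoryTheory.inv m ≫ t) h
  simpa using this

/-- 2-cells between 1-cells into the zero object are unique. -/
private lemma uniq0 (S : LocSCG B) {X : B} {g h : X ⟶ S.zObj} (η θ : g ⟶ h) : η = θ := by
  haveI := S.cellIso (S.toZero h)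
  exact cancelR (S.toZero h) (S.toZero_unique g _ _)

/-- 2-cells between 1-cells out of the zero object are unique. -/
private lemma uniqFrom (S : LocSCG B) {A : B} {g h : S.zObj ⟶ A} (η θ : g ⟶ h) : η = θ := by
  haveI := S.cellIso (S.fromZero h)
  exact cancelR (S.fromZero h) (S.fromZero_unique g _ _)

private lemma invWR (S : LocSCG B) {a b c : B} {g h : a ⟶ b} (η : g ⟶ h) (w : b ⟶ c) :
    haveI := S.cellIso (η ▷ w)
    CategoryTheory.inv (η ▷ w) = (haveI := S.cellIso η; CategoryTheory.inv η) ▷ w := by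
  haveI := S.cellIso (η ▷ w); haveI := S.cellIso η
  apply IsIso.inv_eq_of_hom_inv_id
  rw [← comp_whiskerRight, IsIso.hom_inv_id, id_whiskerRight]


variable (S : LocSCG B)

/-- The canonical 2-cell `x ≫ 0₀₀ ⟶ x`. -/
private noncomputable def eta' {X : B} (x : X ⟶ S.zObj) :
    x ≫ S.zro S.zObj S.zObj ⟶ x :=
  haveI := S.cellIso (S.toZero x)
  (S.sharp (E := S.zObj) x).hom ≫ CategoryTheory.inv (S.toZero x)

/-- The canonical candidate 2-cell `x ≫ 0₀A ⟶ 0_XA`. -/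
private noncomputable def e0 {X A : B} (x : X ⟶ S.zObj) :
    x ≫ S.zro S.zObj A ⟶ S.zro X A :=
  haveI := S.cellIso ((eta' S x) ▷ S.zro S.zObj A)
  CategoryTheory.inv ((eta' S x) ▷ S.zro S.zObj A) ≫
    (α_ x (S.zro S.zObj S.zObj) (S.zro S.zObj A)).hom ≫
    (x ◁ (S.flat (A := S.zObj) (S.zro S.zObj A)).hom) ≫ (S.sharp (E := A) x).hom

private lemma eta'_e0 {X A : B} (x : X ⟶ S.zObj) :
    ((eta' S x) ▷ S.zro S.zObj A) ≫ e0 S x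
      = (α_ x (S.zro S.zObj S.zObj) (S.zro S.zObj A)).hom ≫
        (x ◁ (S.flat (A := S.zObj) (S.zro S.zObj A)).hom) ≫ (S.sharp (E := A) x).hom := by
  haveI := S.cellIso ((eta' S x) ▷ S.zro S.zObj A)
  simp only [e0, IsIso.hom_inv_id_assoc]
  rfl


private lemma flatW {X A C : B} (f : A ⟶ C) :
    (S.flat (A := X) (munit (S.monStr S.zObj A) ≫ f)).hom
      = ((munit (S.monStr X S.zObj)) ◁ (S.flat (A := S.zObj) f).hom) ≫
        (S.sharp (E := C) (munit (S.monStr X S.zObj))).hom := by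
  rw [S.flat_comp (munit (S.monStr S.zObj A)) f]
  rw [show (S.flat (A := X) (munit (S.monStr S.zObj A))).hom
        = (S.sharp (E := A) (munit (S.monStr X S.zObj))).hom from by
      rw [S.flat_zero X S.zObj A, S.sharp_zero X S.zObj A]]
  rw [S.sharp_flat (munit (S.monStr X S.zObj)) f]
  simp

private lemma compat_e0 {X A C : B} (f : A ⟶ C) (x : X ⟶ S.zObj) :
    S.RelKerCompat (S.zro S.zObj A) f (S.flat (A := S.zObj) f).hom x (e0 S x) := by
  unfold LocSCG.RelKerCompat
  simp only [LocSCG.zro]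
  symm
  simp only [e0, LocSCG.zro, comp_whiskerRight, Category.assoc]
  rw [S.sharp_flat x f]
  rw [associator_naturality_middle_assoc]
  rw [← Bicategory.whiskerLeft_comp_assoc]
  rw [show ((S.flat (A := S.zObj) (munit (S.monStr S.zObj A))).hom ▷ f) ≫ (S.flat (A := S.zObj) f).hom
        = (α_ (munit (S.monStr S.zObj S.zObj)) (munit (S.monStr S.zObj A)) f).hom ≫
          (S.flat (A := S.zObj) (munit (S.monStr S.zObj A) ≫ f)).hom from by
      rw [S.flat_comp (munit (S.monStr S.zObj A)) f]; simp]
  rw [Bicategory.whiskerLeft_comp_assoc]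
  rw [show (x ◁ (S.flat (A := S.zObj) (munit (S.monStr S.zObj A) ≫ f)).hom) ≫ (S.sharp (E := C) x).hom
        = (α_ x (munit (S.monStr S.zObj S.zObj)) (munit (S.monStr S.zObj A) ≫ f)).inv ≫
          ((S.sharp (E := S.zObj) x).hom ▷ (munit (S.monStr S.zObj A) ≫ f)) ≫
          (S.flat (A := X) (munit (S.monStr S.zObj A) ≫ f)).hom from by
      rw [S.sharp_flat x (munit (S.monStr S.zObj A) ≫ f)]; simp]
  rw [flatW]
  rw [pentagon_assoc]
  rw [Iso.hom_inv_id_assoc]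
  erw [invWR S (eta' S x) (munit (S.monStr S.zObj A))]
  erw [whiskerRight_comp_symm_assoc]
  simp only [LocSCG.zro]
  erw [Iso.inv_hom_id_assoc]
  erw [← comp_whiskerRight_assoc]
  erw [show (haveI := S.cellIso (eta' S x); CategoryTheory.inv (eta' S x)) ≫ (S.sharp (E := S.zObj) x).hom
        = S.toZero x from by
      haveI := S.cellIso (S.toZero x); haveI := S.cellIso (eta' S x)
      haveI := S.cellIso (S.sharp (E := S.zObj) x).hom
      apply cancelL (eta' S x)
      erw [IsIso.hom_inv_id_assoc]
      erw [eta', Category.assoc, IsIso.inv_hom_id, Category.comp_id]]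
  erw [← whisker_exchange_assoc]
  erw [S.sharp_natural (S.toZero x)]

private lemma e0_eqn {X A : B} (x x'' : X ⟶ S.zObj) (e'' : x'' ≫ S.zro S.zObj S.zObj ⟶ x) :
    (e'' ▷ S.zro S.zObj A) ≫ e0 S x
      = (α_ x'' (S.zro S.zObj S.zObj) (S.zro S.zObj A)).hom ≫
        (x'' ◁ (S.flat (A := S.zObj) (S.zro S.zObj A)).hom) ≫ (S.sharp (E := A) x'').hom := by
  haveI := S.cellIso (S.toZero x)
  have he'' : e'' = ((S.toZero x'' ≫ CategoryTheory.inv (S.toZero x)) ▷ S.zro S.zObj S.zObj) ≫ eta' S x :=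
    uniq0 S _ _
  rw [he'', comp_whiskerRight, Category.assoc, eta'_e0]
  erw [whiskerRight_comp_symm_assoc]
  erw [Iso.inv_hom_id_assoc]
  erw [← whisker_exchange_assoc]
  erw [S.sharp_natural (S.toZero x'' ≫ CategoryTheory.inv (S.toZero x))]
  rfl

private lemma prodUniq {A₁ A₂ P : B} {p₁ : P ⟶ A₁} {p₂ : P ⟶ A₂}
    (hP : IsProduct2 A₁ A₂ P p₁ p₂) {X : B} {r : X ⟶ P} {t₁ : X ⟶ A₁} {t₂ : X ⟶ A₂}
    (ζ₁ : r ≫ p₁ ⟶ t₁) (ζ₂ : r ≫ p₂ ⟶ t₂) (τ : r ⟶ r)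
    (h₁ : (τ ▷ p₁) ≫ ζ₁ = ζ₁) (h₂ : (τ ▷ p₂) ≫ ζ₂ = ζ₂) : τ = 𝟙 r := by
  obtain ⟨ηu, -, hu⟩ := hP.2 X t₁ t₂ r r ζ₁ ζ₂ ζ₁ ζ₂
  have hτ := hu τ ⟨h₁, h₂⟩
  have hid := hu (𝟙 r) ⟨by simp, by simp⟩
  rw [hτ, hid]

private lemma wr_id_of_iso {a b c : B} {u : a ⟶ b} {w w' : b ⟶ c}
    (τ : u ⟶ u) (ι : w ⟶ w') [IsIso (u ◁ ι)] (hw : τ ▷ w = 𝟙 _) : τ ▷ w' = 𝟙 _ := by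
  apply cancelL (u ◁ ι)
  rw [Category.comp_id, whisker_exchange, hw, Category.id_comp]

private lemma wr_id_comp {a b c d : B} {u : a ⟶ b} {s : b ⟶ c} (t : c ⟶ d)
    (τ : u ⟶ u) (hs : τ ▷ s = 𝟙 _) : τ ▷ (s ≫ t) = 𝟙 _ := by
  rw [Bicategory.whiskerRight_comp, hs, id_whiskerRight]
  simp

private noncomputable def invUnique {H : Type*} [Category H] [MonoidalCategory H]
    [BraidedCategory H] {y y' z z' : H}
    (hy : MonoidalCategoryStruct.tensorObj y y' ≅ MonoidalCategoryStruct.tensorUnit H)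
    (hz : MonoidalCategoryStruct.tensorObj z z' ≅ MonoidalCategoryStruct.tensorUnit H)
    (e : y ≅ z) : y' ≅ z' :=
  (MonoidalCategoryStruct.leftUnitor y').symm
    ≪≫ MonoidalCategory.tensorIso ((BraidedCategory.braiding z' z) ≪≫ hz).symm (Iso.refl y')
    ≪≫ MonoidalCategoryStruct.associator z' z y'
    ≪≫ MonoidalCategory.tensorIso (Iso.refl z')
        (MonoidalCategory.tensorIso e.symm (Iso.refl y') ≪≫ hy)
    ≪≫ MonoidalCategoryStruct.rightUnitor z'

private lemma stmt8_fwd {A C : B} (f : A ⟶ C) (hf : CFaithful f) :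
    S.IsRelKernel (S.zro S.zObj A) f (S.flat (A := S.zObj) f).hom
      S.zObj (S.zro S.zObj S.zObj) (S.flat (A := S.zObj) (S.zro S.zObj A)).hom := by
  refine ⟨uniqFrom S _ _, ?_, ?_⟩
  · intro X x e hc
    refine ⟨x, eta' S x, ?_⟩
    have hA := compat_e0 S f x
    have h1 : e ▷ f = (e0 S x) ▷ f := by
      haveI := S.cellIso (S.flat (A := X) f).hom
      apply cancelR (S.flat (A := X) f).hom
      unfold LocSCG.RelKerCompat at hc hA
      exact hc.symm.trans hA
    have h2 : e = e0 S x := hf _ _ h1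
    rw [h2, eta'_e0]
    rfl
  · intro X x e _ x₁ x₂ e₁ e₂ _ _
    haveI := S.cellIso (S.toZero x₂)
    exact ⟨S.toZero x₁ ≫ CategoryTheory.inv (S.toZero x₂), uniq0 S _ _, fun y _ => uniq0 S _ _⟩

private lemma stmt8_bwd {A C : B} (f : A ⟶ C)
    (hR : S.IsRelKernel (S.zro S.zObj A) f (S.flat (A := S.zObj) f).hom
      S.zObj (S.zro S.zObj S.zObj) (S.flat (A := S.zObj) (S.zro S.zObj A)).hom) :
    CFaithful f := by
  intro X g h η θ hw
  haveI := S.cellIso θ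
  let δ : g ⟶ g := η ≫ CategoryTheory.inv θ
  have hδf : δ ▷ f = 𝟙 (g ≫ f) := by
    show (η ≫ CategoryTheory.inv θ) ▷ f = _
    rw [comp_whiskerRight, hw, ← comp_whiskerRight, IsIso.hom_inv_id, id_whiskerRight]
  suffices hδ0 : δ = 𝟙 g by
    have h1 : δ ≫ θ = η := by
      show (η ≫ CategoryTheory.inv θ) ≫ θ = η
      simp
    rw [← h1, hδ0, Category.id_comp]
  -- the product A × A and the pairing of (g, g⁻¹)
  obtain ⟨P, p₁, p₂, hP⟩ := S.hasProd A A
  obtain ⟨g', hg'⟩ := S.objInv g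
  obtain ⟨β⟩ := hg'
  obtain ⟨u, ξ₁, ξ₂, -⟩ := hP.1 X g g'
  obtain ⟨ηδ, ⟨hδ1, hδ2⟩, -⟩ := hP.2 X g g' u u (ξ₁ ≫ δ) ξ₂ ξ₁ ξ₂
  haveI := S.cellIso ξ₁
  haveI := S.cellIso ξ₂
  have hp2 : ηδ ▷ p₂ = 𝟙 (u ≫ p₂) := cancelR ξ₂ (by rw [hδ2, Category.id_comp])
  have hp1 : ηδ ▷ p₁ = (ξ₁ ≫ δ) ≫ CategoryTheory.inv ξ₁ := by
    rw [← hδ1]; simp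
  have hp1f : ηδ ▷ (p₁ ≫ f) = 𝟙 _ := by
    have hmid : ((ξ₁ ≫ δ) ≫ CategoryTheory.inv ξ₁) ▷ f = 𝟙 _ := by
      rw [comp_whiskerRight, comp_whiskerRight, hδf, Category.comp_id,
        ← comp_whiskerRight, IsIso.hom_inv_id, id_whiskerRight]
    rw [Bicategory.whiskerRight_comp, hp1, hmid]
    simp
  have hp2f : ηδ ▷ (p₂ ≫ f) = 𝟙 _ := wr_id_comp f ηδ hp2
  -- the pairing F of (p₁ ≫ f, p₂ ≫ f) over C × C
  obtain ⟨Pc, c₁, c₂, hPc⟩ := S.hasProd C C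
  obtain ⟨F, ψ₁, ψ₂, -⟩ := hPc.1 P (p₁ ≫ f) (p₂ ≫ f)
  have hF : ηδ ▷ F = 𝟙 (u ≫ F) := by
    refine prodUniq hPc ((α_ u F c₁).hom ≫ (u ◁ ψ₁)) ((α_ u F c₂).hom ≫ (u ◁ ψ₂)) _ ?_ ?_
    · rw [whiskerRight_comp_symm_assoc, Iso.inv_hom_id_assoc, ← whisker_exchange,
        hp1f, Category.comp_id]
    · rw [whiskerRight_comp_symm_assoc, Iso.inv_hom_id_assoc, ← whisker_exchange,
        hp2f, Category.comp_id]
  -- the tensor 1-cells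
  letI : MonoidalCategory (X ⟶ A) := S.monStr X A
  letI : MonoidalCategory (P ⟶ A) := S.monStr P A
  letI : SymmetricCategory (P ⟶ A) := S.symm P A
  letI : MonoidalCategory (P ⟶ C) := S.monStr P C
  letI : MonoidalCategory (Pc ⟶ C) := S.monStr Pc C
  haveI := S.cellIso ψ₁
  haveI := S.cellIso ψ₂
  have ι : F ≫ mtens (S.monStr Pc C) c₁ c₂ ≅ mtens (S.monStr P A) p₁ p₂ ≫ f :=
    S.sharpTensor F c₁ c₂ ≪≫ MonoidalCategory.tensorIso (asIso ψ₁) (asIso ψ₂)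
      ≪≫ (S.flatTensor f p₁ p₂).symm
  have hFdc : ηδ ▷ (F ≫ mtens (S.monStr Pc C) c₁ c₂) = 𝟙 _ :=
    wr_id_comp (mtens (S.monStr Pc C) c₁ c₂) ηδ hF
  haveI := S.cellIso (u ◁ ι.hom)
  have hdf : ηδ ▷ (mtens (S.monStr P A) p₁ p₂ ≫ f) = 𝟙 _ := wr_id_of_iso ηδ ι.hom hFdc
  have hdff : (ηδ ▷ mtens (S.monStr P A) p₁ p₂) ▷ f = 𝟙 _ := by
    rw [whiskerRight_comp_symm, hdf]
    simp
  -- the loop `a` on the zero 1-cell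
  have ω : u ≫ mtens (S.monStr P A) p₁ p₂ ≅ munit (S.monStr X A) :=
    S.sharpTensor u p₁ p₂ ≪≫ MonoidalCategory.tensorIso (asIso ξ₁) (asIso ξ₂) ≪≫ β
  set a : munit (S.monStr X A) ⟶ munit (S.monStr X A) :=
    ω.inv ≫ (ηδ ▷ mtens (S.monStr P A) p₁ p₂) ≫ ω.hom with ha
  have haf : a ▷ f = 𝟙 _ := by
    rw [ha, comp_whiskerRight, comp_whiskerRight, hdff, Category.id_comp,
      ← comp_whiskerRight, Iso.inv_hom_id, id_whiskerRight]
  -- the candidate is compatible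
  have hcand : S.RelKerCompat (S.zro S.zObj A) f (S.flat (A := S.zObj) f).hom
      (S.zro X S.zObj) (e0 S (S.zro X S.zObj) ≫ a) := by
    have hA := compat_e0 S f (S.zro X S.zObj)
    unfold LocSCG.RelKerCompat at hA ⊢
    simp only [LocSCG.zro] at hA ⊢
    erw [comp_whiskerRight, Category.assoc, haf, Category.id_comp]
    exact hA
  obtain ⟨x'', e'', hE⟩ := hR.2.1 X (S.zro X S.zObj) (e0 S (S.zro X S.zObj) ≫ a) hcand
  have hB := e0_eqn S (A := A) (S.zro X S.zObj) x'' e''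
  have ha1 : a = 𝟙 _ := by
    haveI := S.cellIso ((e'' ▷ S.zro S.zObj A) ≫ e0 S (S.zro X S.zObj))
    apply cancelL ((e'' ▷ S.zro S.zObj A) ≫ e0 S (S.zro X S.zObj))
    simp only [LocSCG.zro] at hE hB ⊢
    erw [Category.comp_id, Category.assoc]
    exact hE.trans hB.symm
  have hd1 : ηδ ▷ mtens (S.monStr P A) p₁ p₂ = 𝟙 _ := by
    have h2 : ηδ ▷ mtens (S.monStr P A) p₁ p₂ = ω.hom ≫ a ≫ ω.inv := by
      rw [ha]; simp
    rw [h2, ha1, Category.id_comp, Iso.hom_inv_id]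
  -- the shear pairing s of (p₁ ⊗ p₂, p₂)
  obtain ⟨s, σ₁, σ₂, -⟩ := hP.1 P (mtens (S.monStr P A) p₁ p₂) p₂
  haveI := S.cellIso σ₁
  haveI := S.cellIso σ₂
  have hs : ηδ ▷ s = 𝟙 _ := by
    refine prodUniq hP ((α_ u s p₁).hom ≫ (u ◁ σ₁)) ((α_ u s p₂).hom ≫ (u ◁ σ₂)) _ ?_ ?_
    · rw [whiskerRight_comp_symm_assoc, Iso.inv_hom_id_assoc, ← whisker_exchange,
        hd1, Category.comp_id]
    · rw [whiskerRight_comp_symm_assoc, Iso.inv_hom_id_assoc, ← whisker_exchange,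
        hp2, Category.comp_id]
  -- the retraction recovering the first component
  obtain ⟨p₂', hp2'⟩ := S.objInv p₂
  obtain ⟨βp⟩ := hp2'
  have h0 : mtens (S.monStr P A) (s ≫ p₂) (s ≫ p₂') ≅ munit (S.monStr P A) :=
    (S.sharpTensor s p₂ p₂').symm ≪≫ whiskerLeftIso s βp ≪≫ S.sharp (E := A) s
  have hsp2 : (s ≫ p₂') ≅ p₂' := invUnique h0 βp (asIso σ₂)
  have χ : s ≫ mtens (S.monStr P A) p₁ p₂' ≅ p₁ :=
    S.sharpTensor s p₁ p₂' ≪≫ MonoidalCategory.tensorIso (asIso σ₁) hsp2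
      ≪≫ S.tassoc p₁ p₂ p₂' ≪≫ MonoidalCategory.tensorIso (Iso.refl p₁) βp ≪≫ S.trunit p₁
  have hst : ηδ ▷ (s ≫ mtens (S.monStr P A) p₁ p₂') = 𝟙 _ :=
    wr_id_comp (mtens (S.monStr P A) p₁ p₂') ηδ hs
  haveI := S.cellIso (u ◁ χ.hom)
  have hup1 : ηδ ▷ p₁ = 𝟙 _ := wr_id_of_iso ηδ χ.hom hst
  have hfin : ξ₁ ≫ δ = ξ₁ := by
    rw [← hδ1, hup1, Category.id_comp]
  exact cancelL ξ₁ (by rw [Category.comp_id]; exact hfin)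

end Stmt8Aux

/-- `f` is faithful iff the relative kernel `Ker(0_{0,A}, f_I^♭)` is zero. -/
theorem stmt8 {B : Type u} [Bicategory.{w, v} B] [Bicategory.Strict B]
    (S : LocSCG B) (hS : IsRelExact S)
    {A C : B} (f : A ⟶ C) :
    CFaithful f ↔ S.IsRelKernel (S.zro S.zObj A) f (S.flat f).hom
        S.zObj (S.zro S.zObj S.zObj) (S.flat (S.zro S.zObj A)).hom := by
  exact ⟨fun hf => stmt8_fwd S f hf, fun hR => stmt8_bwd S f hR⟩
end

section
/- Let f: A→B, g: B→C be 1-cells and φ: f∘g ⟹ 0 a 2-cell in S. Let (Ker(g), ℓ, ε) be a kernel of g and let (f̲: A→Ker(g), φ̲: f̲∘ℓ ⟹ f) be the factorization of f through ℓ with (f̲∘ε)·f̲_I^♯ = (φ̲∘g)·φ. Then (Ker(f̲), k(f̲), η) is a relative kernel Ker(f,φ), where η := (k(f̲)∘φ̲^{−1})·(ε_{f̲}∘ℓ)·ℓ_I^♭: k(f̲)∘f ⟹ 0. In particular, relative kernels always exist in S. -/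
/-!
Common framework: relatively exact 2-categories (after Nakaoka,
"Cohomology theory in 2-categories").
-/

open CategoryTheory Bicategory

universe w v u

section Aux
set_option linter.unusedSectionVars false
namespace LocSCG

open CategoryTheory Bicategory

attribute [reducible] LocSCG.zro

variable {B : Type u} [Bicategory.{w, v} B] [Bicategory.Strict B] (S : LocSCG B)

/- Restatements of the structure fields with `munit` replaced by `S.zro`
(definitionally equal), so that `rw` matches syntactically. -/

theorem sharp_natural' {A C E : B} {f g : A ⟶ C} (η : f ⟶ g) :
    (η ▷ S.zro C E) ≫ (S.sharp g).hom = (S.sharp f).hom := S.sharp_natural η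

theorem flat_natural' {A C E : B} {f g : C ⟶ E} (η : f ⟶ g) :
    (S.zro A C ◁ η) ≫ (S.flat g).hom = (S.flat f).hom := S.flat_natural η

theorem sharp_zero' (A C E : B) :
    (S.sharp (E := E) (S.zro A C)).hom = eqToHom (S.zero_comp A C E) := S.sharp_zero A C E

theorem flat_zero' (A C E : B) :
    (S.flat (A := A) (S.zro C E)).hom = eqToHom (S.zero_comp A C E) := S.flat_zero A C E

theorem sharp_comp' {A C E G : B} (f : A ⟶ C) (g : C ⟶ E) :
    (S.sharp (E := G) (f ≫ g)).hom
      = (α_ f g (S.zro E G)).hom ≫ (f ◁ (S.sharp g).hom) ≫ (S.sharp f).hom := S.sharp_comp f g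

theorem flat_comp' {X A C E : B} (f : A ⟶ C) (g : C ⟶ E) :
    (S.flat (A := X) (f ≫ g)).hom
      = (α_ (S.zro X A) f g).inv ≫ ((S.flat f).hom ▷ g) ≫ (S.flat g).hom := S.flat_comp f g

theorem sharp_flat' {A C E G : B} (f : A ⟶ C) (g : E ⟶ G) :
    ((S.sharp f).hom ▷ g) ≫ (S.flat g).hom
      = (α_ f (S.zro C E) g).hom ≫ (f ◁ (S.flat g).hom) ≫ (S.sharp f).hom := S.sharp_flat f g

theorem lemA {C E Kg : B} (g : C ⟶ E) (l : Kg ⟶ C) (ε₀ : l ≫ g ⟶ S.zro Kg E)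
    {X : B} (y : X ⟶ Kg) (θ : y ⟶ S.zro X Kg) :
    (((θ ▷ l) ≫ (S.flat l).hom) ▷ g) ≫ (S.flat g).hom
      = (α_ y l g).hom ≫ (y ◁ ε₀) ≫ (S.sharp y).hom := by
  have hfz : (S.flat (A := X) (S.zro Kg E)).hom = (S.sharp (E := E) (S.zro X Kg)).hom :=
    (S.flat_zero X Kg E).trans (S.sharp_zero X Kg E).symm
  calc (((θ ▷ l) ≫ (S.flat l).hom) ▷ g) ≫ (S.flat g).hom
      = (θ ▷ l ▷ g) ≫ ((S.flat l).hom ▷ g) ≫ (S.flat g).hom := by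
        simp [comp_whiskerRight]
    _ = (θ ▷ l ▷ g) ≫ (α_ (S.zro X Kg) l g).hom ≫ (S.flat (l ≫ g)).hom := by
        rw [S.flat_comp' l g]; simp
    _ = (α_ y l g).hom ≫ (θ ▷ (l ≫ g)) ≫ (S.flat (l ≫ g)).hom := by
        rw [associator_naturality_left_assoc]
    _ = (α_ y l g).hom ≫ (θ ▷ (l ≫ g)) ≫ (S.zro X Kg ◁ ε₀)
          ≫ (S.flat (S.zro Kg E)).hom := by
        rw [S.flat_natural' ε₀]
    _ = (α_ y l g).hom ≫ (y ◁ ε₀) ≫ (θ ▷ S.zro Kg E) ≫ (S.flat (S.zro Kg E)).hom := by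
        rw [← whisker_exchange_assoc]
    _ = (α_ y l g).hom ≫ (y ◁ ε₀) ≫ (S.sharp y).hom := by
        rw [hfz, S.sharp_natural' θ]

variable {A C E Kg : B} {f : A ⟶ C} {g : C ⟶ E} {φ : f ≫ g ⟶ S.zro A E}
  {l : Kg ⟶ C} {ε₀ : l ≫ g ⟶ S.zro Kg E} {fb : A ⟶ Kg} {φb : fb ≫ l ⟶ f}

theorem lemC2 {X : B} :
    ((S.flat (A := X) l).hom ▷ g) ≫ (S.flat g).hom
      = (α_ (S.zro X Kg) l g).hom ≫ (S.zro X Kg ◁ ε₀) ≫ (S.sharp (S.zro X Kg)).hom := by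
  have h0 := S.lemA g l ε₀ (S.zro X Kg) (𝟙 _)
  simpa using h0

theorem lemInj (hKg : S.IsKernel g Kg l ε₀) {X : B} {y : X ⟶ Kg}
    (θ θ' : y ⟶ S.zro X Kg)
    (h : (θ ▷ l) ≫ (S.flat l).hom = (θ' ▷ l) ≫ (S.flat l).hom) : θ = θ' := by
  obtain ⟨u, -, huniq⟩ := hKg.2 X (S.zro X C) (S.flat g).hom y (S.zro X Kg)
      ((θ ▷ l) ≫ (S.flat l).hom) (S.flat l).hom (S.lemA g l ε₀ y θ) (S.lemC2 (ε₀ := ε₀))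
  exact (huniq θ rfl).trans (huniq θ' h.symm).symm

theorem lemC1 (hfb : (φb ▷ g) ≫ φ = (α_ fb l g).hom ≫ (fb ◁ ε₀) ≫ (S.sharp fb).hom)
    {X : B} (x : X ⟶ A) (e : x ≫ f ⟶ S.zro X C) (hc : S.RelKerCompat f g φ x e) :
    (((α_ x fb l).hom ≫ (x ◁ φb) ≫ e) ▷ g) ≫ (S.flat g).hom
      = (α_ (x ≫ fb) l g).hom ≫ ((x ≫ fb) ◁ ε₀) ≫ (S.sharp (x ≫ fb)).hom := by
  have hc' : (e ▷ g) ≫ (S.flat g).hom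
      = (α_ x f g).hom ≫ (x ◁ φ) ≫ (S.sharp x).hom := hc.symm
  calc (((α_ x fb l).hom ≫ (x ◁ φb) ≫ e) ▷ g) ≫ (S.flat g).hom
      = ((α_ x fb l).hom ▷ g) ≫ ((x ◁ φb) ▷ g) ≫ (e ▷ g) ≫ (S.flat g).hom := by
        simp [comp_whiskerRight]
    _ = ((α_ x fb l).hom ▷ g) ≫ ((x ◁ φb) ▷ g) ≫ (α_ x f g).hom ≫ (x ◁ φ)
          ≫ (S.sharp x).hom := by rw [hc']
    _ = ((α_ x fb l).hom ▷ g) ≫ (α_ x (fb ≫ l) g).hom ≫ (x ◁ (φb ▷ g)) ≫ (x ◁ φ)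
          ≫ (S.sharp x).hom := by rw [associator_naturality_middle_assoc]
    _ = ((α_ x fb l).hom ▷ g) ≫ (α_ x (fb ≫ l) g).hom ≫ (x ◁ ((φb ▷ g) ≫ φ))
          ≫ (S.sharp x).hom := by simp [Bicategory.whiskerLeft_comp]
    _ = ((α_ x fb l).hom ▷ g) ≫ (α_ x (fb ≫ l) g).hom
          ≫ (x ◁ ((α_ fb l g).hom ≫ (fb ◁ ε₀) ≫ (S.sharp fb).hom)) ≫ (S.sharp x).hom := by
        rw [hfb]
    _ = ((α_ x fb l).hom ▷ g) ≫ (α_ x (fb ≫ l) g).hom ≫ (x ◁ (α_ fb l g).hom)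
          ≫ (x ◁ (fb ◁ ε₀)) ≫ (x ◁ (S.sharp fb).hom) ≫ (S.sharp x).hom := by
        simp [Bicategory.whiskerLeft_comp]
    _ = ((α_ x fb l).hom ▷ g) ≫ (α_ x (fb ≫ l) g).hom ≫ (x ◁ (α_ fb l g).hom)
          ≫ (x ◁ (fb ◁ ε₀)) ≫ (α_ x fb (S.zro Kg E)).inv ≫ (S.sharp (x ≫ fb)).hom := by
        rw [S.sharp_comp' x fb]; simp
    _ = ((α_ x fb l).hom ▷ g) ≫ (α_ x (fb ≫ l) g).hom ≫ (x ◁ (α_ fb l g).hom)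
          ≫ (α_ x fb (l ≫ g)).inv ≫ ((x ≫ fb) ◁ ε₀) ≫ (S.sharp (x ≫ fb)).hom := by
        rw [associator_inv_naturality_right_assoc]
    _ = (α_ (x ≫ fb) l g).hom ≫ ((x ≫ fb) ◁ ε₀) ≫ (S.sharp (x ≫ fb)).hom := by
        simp [Bicategory.Strict.associator_eqToIso]

theorem lemE0 (hKg : S.IsKernel g Kg l ε₀)
    (hfb : (φb ▷ g) ≫ φ = (α_ fb l g).hom ≫ (fb ◁ ε₀) ≫ (S.sharp fb).hom)
    {X : B} (x : X ⟶ A) (e : x ≫ f ⟶ S.zro X C) (hc : S.RelKerCompat f g φ x e) :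
    ∃ e₀ : x ≫ fb ⟶ S.zro X Kg,
      (e₀ ▷ l) ≫ (S.flat l).hom = (α_ x fb l).hom ≫ (x ◁ φb) ≫ e := by
  obtain ⟨u, hu, -⟩ := hKg.2 X (S.zro X C) (S.flat g).hom (x ≫ fb) (S.zro X Kg)
      ((α_ x fb l).hom ≫ (x ◁ φb) ≫ e) (S.flat l).hom
      (S.lemC1 hfb x e hc) (S.lemC2 (ε₀ := ε₀))
  exact ⟨u, hu⟩

variable {K : B} {k : K ⟶ A} {ε' : k ≫ fb ⟶ S.zro K Kg}

theorem lemIb {X : B} (x' : X ⟶ K) (x : X ⟶ A) (e' : x' ≫ k ⟶ x)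
    (e : x ≫ f ⟶ S.zro X C) (e₀ : x ≫ fb ⟶ S.zro X Kg)
    (he₀ : (e₀ ▷ l) ≫ (S.flat l).hom = (α_ x fb l).hom ≫ (x ◁ φb) ≫ e) :
    (((e' ▷ fb) ≫ e₀) ▷ l) ≫ (S.flat l).hom
      = (α_ (x' ≫ k) fb l).hom ≫ ((x' ≫ k) ◁ φb) ≫ (e' ▷ f) ≫ e := by
  calc (((e' ▷ fb) ≫ e₀) ▷ l) ≫ (S.flat l).hom
      = ((e' ▷ fb) ▷ l) ≫ (e₀ ▷ l) ≫ (S.flat l).hom := by simp [comp_whiskerRight]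
    _ = ((e' ▷ fb) ▷ l) ≫ (α_ x fb l).hom ≫ (x ◁ φb) ≫ e := by rw [he₀]
    _ = (α_ (x' ≫ k) fb l).hom ≫ (e' ▷ (fb ≫ l)) ≫ (x ◁ φb) ≫ e := by
        rw [associator_naturality_left_assoc]
    _ = (α_ (x' ≫ k) fb l).hom ≫ ((x' ≫ k) ◁ φb) ≫ (e' ▷ f) ≫ e := by
        rw [← whisker_exchange_assoc]

theorem lemIa {X : B} (x' : X ⟶ K) :
    (((α_ x' k fb).hom ≫ (x' ◁ ε') ≫ (S.sharp x').hom) ▷ l) ≫ (S.flat l).hom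
      = (α_ (x' ≫ k) fb l).hom ≫ ((x' ≫ k) ◁ φb) ≫ (α_ x' k f).hom
          ≫ (x' ◁ ((k ◁ S.inv2 φb) ≫ (α_ k fb l).inv ≫ (ε' ▷ l) ≫ (S.flat l).hom))
          ≫ (S.sharp x').hom := by
  haveI := S.cellIso φb
  have hcancel : (k ◁ φb) ≫ (k ◁ S.inv2 φb) = 𝟙 (k ≫ (fb ≫ l)) := by
    rw [← Bicategory.whiskerLeft_comp]
    simp [LocSCG.inv2]
  have hmid : (α_ k fb l).inv ≫ (ε' ▷ l) ≫ (S.flat l).hom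
      = (k ◁ φb) ≫ (k ◁ S.inv2 φb) ≫ (α_ k fb l).inv ≫ (ε' ▷ l) ≫ (S.flat l).hom := by
    conv_rhs => rw [← Category.assoc, hcancel, Category.id_comp]
  calc (((α_ x' k fb).hom ≫ (x' ◁ ε') ≫ (S.sharp x').hom) ▷ l) ≫ (S.flat l).hom
      = ((α_ x' k fb).hom ▷ l) ≫ ((x' ◁ ε') ▷ l) ≫ ((S.sharp x').hom ▷ l)
          ≫ (S.flat l).hom := by simp [comp_whiskerRight]
    _ = ((α_ x' k fb).hom ▷ l) ≫ ((x' ◁ ε') ▷ l) ≫ (α_ x' (S.zro K Kg) l).hom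
          ≫ (x' ◁ (S.flat l).hom) ≫ (S.sharp x').hom := by rw [S.sharp_flat' x' l]
    _ = ((α_ x' k fb).hom ▷ l) ≫ (α_ x' (k ≫ fb) l).hom ≫ (x' ◁ (ε' ▷ l))
          ≫ (x' ◁ (S.flat l).hom) ≫ (S.sharp x').hom := by
        rw [associator_naturality_middle_assoc]
    _ = (α_ (x' ≫ k) fb l).hom ≫ (α_ x' k (fb ≫ l)).hom
          ≫ (x' ◁ ((α_ k fb l).inv ≫ (ε' ▷ l) ≫ (S.flat l).hom)) ≫ (S.sharp x').hom := by
        simp [Bicategory.whiskerLeft_comp, Bicategory.Strict.associator_eqToIso]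
    _ = (α_ (x' ≫ k) fb l).hom ≫ (α_ x' k (fb ≫ l)).hom
          ≫ (x' ◁ ((k ◁ φb) ≫ (k ◁ S.inv2 φb) ≫ (α_ k fb l).inv ≫ (ε' ▷ l)
              ≫ (S.flat l).hom)) ≫ (S.sharp x').hom := by rw [← hmid]
    _ = (α_ (x' ≫ k) fb l).hom ≫ (α_ x' k (fb ≫ l)).hom ≫ (x' ◁ (k ◁ φb))
          ≫ (x' ◁ ((k ◁ S.inv2 φb) ≫ (α_ k fb l).inv ≫ (ε' ▷ l) ≫ (S.flat l).hom))
          ≫ (S.sharp x').hom := by simp [Bicategory.whiskerLeft_comp]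
    _ = (α_ (x' ≫ k) fb l).hom ≫ ((x' ≫ k) ◁ φb) ≫ (α_ x' k f).hom
          ≫ (x' ◁ ((k ◁ S.inv2 φb) ≫ (α_ k fb l).inv ≫ (ε' ▷ l) ≫ (S.flat l).hom))
          ≫ (S.sharp x').hom := by rw [← associator_naturality_right_assoc]

theorem lemKey (hKg : S.IsKernel g Kg l ε₀) {X : B} (x' : X ⟶ K) (x : X ⟶ A)
    (e' : x' ≫ k ⟶ x) (e : x ≫ f ⟶ S.zro X C) (e₀ : x ≫ fb ⟶ S.zro X Kg)
    (he₀ : (e₀ ▷ l) ≫ (S.flat l).hom = (α_ x fb l).hom ≫ (x ◁ φb) ≫ e) :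
    ((e' ▷ fb) ≫ e₀ = (α_ x' k fb).hom ≫ (x' ◁ ε') ≫ (S.sharp x').hom)
      ↔ ((e' ▷ f) ≫ e = (α_ x' k f).hom
          ≫ (x' ◁ ((k ◁ S.inv2 φb) ≫ (α_ k fb l).inv ≫ (ε' ▷ l) ≫ (S.flat l).hom))
          ≫ (S.sharp x').hom) := by
  haveI := S.cellIso φb
  have hIb := S.lemIb (l := l) (φb := φb) x' x e' e e₀ he₀
  have hIa := S.lemIa (l := l) (φb := φb) (ε' := ε') x'
  constructor
  · intro h
    have h2 := hIb.symm.trans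
      ((congrArg (fun t => (t ▷ l) ≫ (S.flat l).hom) h).trans hIa)
    rwa [cancel_epi, cancel_epi] at h2
  · intro h
    refine S.lemInj hKg _ _ ?_
    rw [hIb, h, hIa]

theorem lemCompat (hfb : (φb ▷ g) ≫ φ = (α_ fb l g).hom ≫ (fb ◁ ε₀) ≫ (S.sharp fb).hom) :
    S.RelKerCompat f g φ k
      ((k ◁ S.inv2 φb) ≫ (α_ k fb l).inv ≫ (ε' ▷ l) ≫ (S.flat l).hom) := by
  haveI := S.cellIso φb
  have hfb' : (fb ◁ ε₀) ≫ (S.sharp fb).hom = (α_ fb l g).inv ≫ (φb ▷ g) ≫ φ := by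
    simp [hfb]
  unfold LocSCG.RelKerCompat
  refine Eq.symm ?_
  calc (((k ◁ S.inv2 φb) ≫ (α_ k fb l).inv ≫ (ε' ▷ l) ≫ (S.flat l).hom) ▷ g)
        ≫ (S.flat g).hom
      = ((k ◁ S.inv2 φb) ▷ g) ≫ ((α_ k fb l).inv ▷ g)
          ≫ (((ε' ▷ l) ≫ (S.flat l).hom) ▷ g) ≫ (S.flat g).hom := by
        simp [comp_whiskerRight]
    _ = ((k ◁ S.inv2 φb) ▷ g) ≫ ((α_ k fb l).inv ▷ g) ≫ (α_ (k ≫ fb) l g).hom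
          ≫ ((k ≫ fb) ◁ ε₀) ≫ (S.sharp (k ≫ fb)).hom := by
        rw [S.lemA g l ε₀ (k ≫ fb) ε']
    _ = ((k ◁ S.inv2 φb) ▷ g) ≫ ((α_ k fb l).inv ▷ g) ≫ (α_ (k ≫ fb) l g).hom
          ≫ (α_ k fb (l ≫ g)).hom ≫ (k ◁ (fb ◁ ε₀)) ≫ (α_ k fb (S.zro Kg E)).inv
          ≫ (S.sharp (k ≫ fb)).hom := by
        rw [comp_whiskerLeft]; simp only [Category.assoc]
    _ = ((k ◁ S.inv2 φb) ▷ g) ≫ ((α_ k fb l).inv ▷ g) ≫ (α_ (k ≫ fb) l g).hom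
          ≫ (α_ k fb (l ≫ g)).hom ≫ (k ◁ (fb ◁ ε₀)) ≫ (k ◁ (S.sharp fb).hom)
          ≫ (S.sharp k).hom := by
        rw [S.sharp_comp' k fb]; simp
    _ = ((k ◁ S.inv2 φb) ▷ g) ≫ ((α_ k fb l).inv ▷ g) ≫ (α_ (k ≫ fb) l g).hom
          ≫ (α_ k fb (l ≫ g)).hom ≫ (k ◁ ((fb ◁ ε₀) ≫ (S.sharp fb).hom))
          ≫ (S.sharp k).hom := by
        simp [Bicategory.whiskerLeft_comp]
    _ = ((k ◁ S.inv2 φb) ▷ g) ≫ ((α_ k fb l).inv ▷ g) ≫ (α_ (k ≫ fb) l g).hom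
          ≫ (α_ k fb (l ≫ g)).hom ≫ (k ◁ ((α_ fb l g).inv ≫ (φb ▷ g) ≫ φ))
          ≫ (S.sharp k).hom := by rw [hfb']
    _ = ((k ◁ S.inv2 φb) ▷ g) ≫ ((α_ k fb l).inv ▷ g) ≫ (α_ (k ≫ fb) l g).hom
          ≫ (α_ k fb (l ≫ g)).hom ≫ (k ◁ (α_ fb l g).inv) ≫ (k ◁ (φb ▷ g))
          ≫ (k ◁ φ) ≫ (S.sharp k).hom := by
        simp [Bicategory.whiskerLeft_comp]
    _ = (α_ k f g).hom ≫ (k ◁ (S.inv2 φb ▷ g)) ≫ (α_ k (fb ≫ l) g).inv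
          ≫ ((α_ k fb l).inv ▷ g) ≫ (α_ (k ≫ fb) l g).hom
          ≫ (α_ k fb (l ≫ g)).hom ≫ (k ◁ (α_ fb l g).inv) ≫ (k ◁ (φb ▷ g))
          ≫ (k ◁ φ) ≫ (S.sharp k).hom := by
        rw [whisker_assoc]; simp only [Category.assoc]
    _ = (α_ k f g).hom ≫ (k ◁ (S.inv2 φb ▷ g)) ≫ (k ◁ (φb ▷ g))
          ≫ (k ◁ φ) ≫ (S.sharp k).hom := by
        simp [Bicategory.Strict.associator_eqToIso]
    _ = (α_ k f g).hom ≫ (k ◁ φ) ≫ (S.sharp k).hom := by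
        rw [← Bicategory.whiskerLeft_comp_assoc, ← comp_whiskerRight]
        simp [LocSCG.inv2]

theorem relkerMain (hKg : S.IsKernel g Kg l ε₀)
    (hfb : (φb ▷ g) ≫ φ = (α_ fb l g).hom ≫ (fb ◁ ε₀) ≫ (S.sharp fb).hom)
    (hK : S.IsKernel fb K k ε') :
    S.IsRelKernel f g φ K k
      ((k ◁ S.inv2 φb) ≫ (α_ k fb l).inv ≫ (ε' ▷ l) ≫ (S.flat l).hom) := by
  refine ⟨S.lemCompat hfb, ?_, ?_⟩
  · intro X x e hc
    obtain ⟨e₀, he₀⟩ := S.lemE0 hKg hfb x e hc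
    obtain ⟨x', e', hx'⟩ := hK.1 X x e₀
    exact ⟨x', e', (S.lemKey hKg x' x e' e e₀ he₀).1 hx'⟩
  · intro X x e hc x₁ x₂ e₁ e₂ h₁ h₂
    obtain ⟨e₀, he₀⟩ := S.lemE0 hKg hfb x e hc
    exact hK.2 X x e₀ x₁ x₂ e₁ e₂ ((S.lemKey hKg x₁ x e₁ e e₀ he₀).2 h₁)
      ((S.lemKey hKg x₂ x e₂ e e₀ he₀).2 h₂)

end LocSCG
end Aux
/-- the relative kernel `Ker(f, φ)` is computed as the kernel of the
induced 1-cell `f̲ : A ⟶ Ker g`; in particular relative kernels always exist. -/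
theorem stmt13 {B : Type u} [Bicategory.{w, v} B] [Bicategory.Strict B]
    (S : LocSCG B) (hS : IsRelExact S)
    {A C E : B} (f : A ⟶ C) (g : C ⟶ E) (φ : f ≫ g ⟶ S.zro A E)
    (Kg : B) (l : Kg ⟶ C) (ε₀ : l ≫ g ⟶ S.zro Kg E) (hKg : S.IsKernel g Kg l ε₀)
    (fb : A ⟶ Kg) (φb : fb ≫ l ⟶ f)
    (hfb : (φb ▷ g) ≫ φ = (α_ fb l g).hom ≫ (fb ◁ ε₀) ≫ (S.sharp fb).hom)
    (K : B) (k : K ⟶ A) (ε' : k ≫ fb ⟶ S.zro K Kg) (hK : S.IsKernel fb K k ε') :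
    S.IsRelKernel f g φ K k
        ((k ◁ S.inv2 φb) ≫ (α_ k fb l).inv ≫ (ε' ▷ l) ≫ (S.flat l).hom)
      ∧ ∀ {A' C' E' : B} (f' : A' ⟶ C') (g' : C' ⟶ E') (φ' : f' ≫ g' ⟶ S.zro A' E'),
          ∃ (K' : B) (k' : K' ⟶ A') (ε'' : k' ≫ f' ⟶ S.zro K' C'),
            S.IsRelKernel f' g' φ' K' k' ε'' := by
  refine ⟨S.relkerMain hKg hfb hK, ?_⟩
  intro A' C' E' f' g' φ'
  obtain ⟨Kg', l', ε1, hKg'⟩ := hS.hasKer g'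
  obtain ⟨fb', φb', hfb'⟩ := hKg'.1 A' f' φ'
  obtain ⟨K', k', ε2, hK'⟩ := hS.hasKer fb'
  exact ⟨K', k', _, S.relkerMain hKg' hfb' hK'⟩
end
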